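/- Let α = (√3 − 1)/2 and β = √3/3. For every positive integer n: if the canonical K-representation of n has last (least significant) digit 1, then g_n = 2·⌊αn⌋ + 1; if the last digit is 0 or 2, then g_n = 2·⌊αn + β⌋. -/

import Mathlib

open Finset

/-- The sequence 𝒦 with 𝒦₀ = 1, 𝒦₁ = 3, 𝒦ₙ = 2𝒦ₙ₋₁ + 2𝒦ₙ₋₂. -/
def Kcal : ℕ → ℕ
  | 0 => 1
  | 1 => 3
  | (n + 2) => 2 * Kcal (n + 1) + 2 * Kcal n

/-- For a digit string `a_t ⋯ a_0` given as the list `l = [a_0, a_1, …, a_t]`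
(least significant digit first), its value `∑ a_i 𝒦_i`. -/
def valK (l : List ℕ) : ℕ := ∑ i ∈ Finset.range l.length, l.getD i 0 * Kcal i

/-- `l = [a_0, a_1, …, a_t]` is a canonical digit string: all digits in {0,1,2},
leading digit `a_t` nonzero, and no index `i` with `a_{i+1} = a_i = 2`. -/
def GoodRep (l : List ℕ) : Prop :=
  (∀ d ∈ l, d ≤ 2) ∧ (l.getLast? ≠ some 0) ∧
    ∀ i : ℕ, ¬ (l.getD i 0 = 2 ∧ l.getD (i + 1) 0 = 2)

def vK : ℕ → List ℕ → ℕ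
  | _, [] => 0
  | i, b :: y => b * Kcal i + vK (i+1) y

def NoAdj (l : List ℕ) : Prop := ∀ i : ℕ, ¬ (l.getD i 0 = 2 ∧ l.getD (i + 1) 0 = 2)

def pat : ℕ → List ℕ
  | 0 => []
  | k+1 => (if k % 2 = 0 then 2 else 1) :: pat k

def decList (k c : ℕ) (r : List ℕ) : List ℕ :=
  if c = 1 ∧ r = [] then pat k else pat k ++ (c-1) :: r

lemma Kcal_rec (i : ℕ) : Kcal (i+2) = 2*Kcal (i+1) + 2*Kcal i := rfl

lemma Kcal_ge (k : ℕ) : 1 ≤ Kcal k ∧ 3 ≤ Kcal (k+1) := by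
  induction k with
  | zero => exact ⟨le_refl 1, le_refl 3⟩
  | succ n ih => exact ⟨le_trans (by norm_num) ih.2, by rw [Kcal_rec]; omega⟩

lemma valK_eq_vK (l : List ℕ) : valK l = vK 0 l := by
  suffices h : ∀ (l : List ℕ) (i : ℕ), (∑ j ∈ range l.length, l.getD j 0 * Kcal (i+j)) = vK i l by
    have := h l 0; simpa [valK] using this
  intro l
  induction l with
  | nil => simp [vK]
  | cons b y ih =>
    intro i
    rw [List.length_cons, Finset.sum_range_succ']
    simp only [List.getD_cons_succ, List.getD_cons_zero, vK]
    rw [← ih (i+1)]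
    rw [add_comm]
    congr 1
    apply Finset.sum_congr rfl; intro j _; congr 2; omega

lemma vK_two (l : List ℕ) : ∀ i, vK (i+2) l = 2 * vK (i+1) l + 2 * vK i l := by
  induction l with
  | nil => intro i; simp [vK]
  | cons b y ih => intro i; simp only [vK, Kcal_rec, ih (i+1)]; ring

lemma vK_append (u v : List ℕ) : ∀ i, vK i (u ++ v) = vK i u + vK (i + u.length) v := by
  induction u with
  | nil => intro i; simp [vK]
  | cons b y ih =>
    intro i
    show b * Kcal i + vK (i+1) (y ++ v) = b * Kcal i + vK (i+1) y + vK (i + (y.length + 1)) v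
    rw [ih (i+1), show i + (y.length+1) = i+1+y.length by omega]; ring

lemma vK_replicate0 (k : ℕ) : ∀ i, vK i (List.replicate k 0) = 0 := by
  induction k with
  | zero => intro i; simp [vK]
  | succ n ih => intro i; simp [List.replicate_succ, vK, ih]


lemma pat_val (k : ℕ) : vK 0 (pat k) + 1 = Kcal k ∧ vK 1 (pat k) + 3 = Kcal (k+1) + k % 2 := by
  induction k with
  | zero => simp [pat, vK, Kcal]
  | succ n ih =>
    constructor
    · show vK 0 ((if n % 2 = 0 then 2 else 1) :: pat n) + 1 = Kcal (n+1)
      simp only [vK, Kcal]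
      rcases Nat.even_or_odd n with h | h
      · have : n % 2 = 0 := Nat.even_iff.mp h
        simp [this] at ih ⊢; omega
      · have : n % 2 = 1 := Nat.odd_iff.mp h
        simp [this] at ih ⊢; omega
    · show vK 1 ((if n % 2 = 0 then 2 else 1) :: pat n) + 3 = Kcal (n+2) + (n+1) % 2
      simp only [vK, Kcal_rec, vK_two (pat n) 0]
      have hK : Kcal 1 = 3 := rfl
      rcases Nat.even_or_odd n with h | h
      · have h0 : n % 2 = 0 := Nat.even_iff.mp h
        have h1 : (n+1) % 2 = 1 := by omega
        simp [h0, h1, hK] at ih ⊢; omega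
      · have h0 : n % 2 = 1 := Nat.odd_iff.mp h
        have h1 : (n+1) % 2 = 0 := by omega
        simp [h0, h1, hK] at ih ⊢; omega

lemma pat_mem {k : ℕ} {d : ℕ} (h : d ∈ pat k) : 1 ≤ d ∧ d ≤ 2 := by
  induction k with
  | zero => simp [pat] at h
  | succ n ih =>
    simp only [pat, List.mem_cons] at h
    rcases h with h | h
    · split at h <;> omega
    · exact ih h

lemma pat_getLast {k : ℕ} (hk : k ≠ 0) : (pat k).getLast? = some 2 := by
  induction k with
  | zero => omega
  | succ n ih =>
    rcases Nat.eq_zero_or_pos n with h | h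
    · subst h; simp [pat]
    · have hne : pat n ≠ [] := by
        cases n with
        | zero => omega
        | succ m => simp [pat]
      obtain ⟨c, t, hct⟩ := List.exists_cons_of_ne_nil hne
      show ((if n % 2 = 0 then 2 else 1) :: pat n).getLast? = some 2
      rw [hct, List.getLast?_cons_cons, ← hct]
      exact ih (by omega)

lemma noAdj_cons {b : ℕ} {y : List ℕ} :
    NoAdj (b :: y) ↔ (¬ (b = 2 ∧ y.getD 0 0 = 2)) ∧ NoAdj y := by
  constructor
  · intro h
    refine ⟨by simpa using h 0, fun i => by simpa using h (i+1)⟩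
  · rintro ⟨h0, h⟩ i
    cases i with
    | zero => simpa using h0
    | succ j => simpa using h j

lemma noAdj_nil : NoAdj [] := by intro i; simp


lemma pat_headD (k : ℕ) : (pat (k+1)).getD 0 0 = if k % 2 = 0 then 2 else 1 := by
  simp [pat]

lemma getD0_append {u v : List ℕ} (h : u ≠ []) : (u ++ v).getD 0 0 = u.getD 0 0 := by
  obtain ⟨c, t, hct⟩ := List.exists_cons_of_ne_nil h
  subst hct; simp

lemma noAdj_pat_append (k : ℕ) {z : List ℕ} (hz : NoAdj z) (hz0 : z.getD 0 0 ≠ 2) :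
    NoAdj (pat k ++ z) := by
  induction k with
  | zero => simpa [pat]
  | succ n ih =>
    show NoAdj (((if n % 2 = 0 then 2 else 1) :: pat n) ++ z)
    rw [List.cons_append, noAdj_cons]
    refine ⟨?_, ih⟩
    cases n with
    | zero => simp [pat]; simpa [List.getD] using hz0
    | succ m =>
      rw [getD0_append (by simp [pat]), pat_headD]
      rcases Nat.even_or_odd m with h | h
      · have h0 : m % 2 = 0 := Nat.even_iff.mp h
        have h1 : (m+1) % 2 = 1 := by omega
        simp [h0, h1]
      · have h0 : m % 2 = 1 := Nat.odd_iff.mp h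
        have h1 : (m+1) % 2 = 0 := by omega
        simp [h0, h1]

lemma pat_length (k : ℕ) : (pat k).length = k := by
  induction k with
  | zero => rfl
  | succ n ih => simp [pat, ih]


lemma decList_succ (k c : ℕ) (r : List ℕ) :
    decList (k+1) c r = (if k % 2 = 0 then 2 else 1) :: decList k c r := by
  unfold decList
  by_cases h : c = 1 ∧ r = [] <;> simp [h, pat]

lemma decList_val (k c : ℕ) (r : List ℕ) (hc : 1 ≤ c) :
    vK 0 (decList k c r) + 1 = c * Kcal k + vK (k+1) r := by
  unfold decList
  by_cases h : c = 1 ∧ r = []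
  · obtain ⟨h1, h2⟩ := h
    subst h1; subst h2
    simp [vK, (pat_val k).1]
  · simp only [h, if_false]
    rw [vK_append, pat_length, show (0:ℕ) + k = k from by omega]
    have h1 := (pat_val k).1
    have h2 : vK k ((c-1) :: r) = (c-1) * Kcal k + vK (k+1) r := rfl
    have h3 := (Kcal_ge k).1
    rw [h2]
    have : (c-1) * Kcal k + Kcal k = c * Kcal k := by
      cases c with
      | zero => omega
      | succ c' => simp [Nat.succ_sub_one]; ring
    omega

lemma good_decList (k c : ℕ) (r : List ℕ) (hc : 1 ≤ c) (hc2 : c ≤ 2)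
    (hr : ∀ d ∈ r, d ≤ 2) (hlast : (c :: r).getLast? ≠ some 0) (hadj : NoAdj r)
    (hne : ¬ (k = 0 ∧ c = 1 ∧ r = [])) : GoodRep (decList k c r) := by
  by_cases h : c = 1 ∧ r = []
  · obtain ⟨h1, h2⟩ := h
    subst h1; subst h2
    rw [decList, if_pos ⟨rfl, rfl⟩]
    refine ⟨fun d hd => (pat_mem hd).2, ?_, ?_⟩
    · rw [pat_getLast (k := k) (by tauto)]; simp
    · have := noAdj_pat_append k (z := []) (by intro i; simp) (by simp)
      rw [List.append_nil] at this
      exact this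
  · rw [decList, if_neg h]
    refine ⟨?_, ?_, ?_⟩
    · intro d hd
      rcases List.mem_append.mp hd with h1 | h1
      · exact (pat_mem h1).2
      · rcases List.mem_cons.mp h1 with h2 | h2
        · omega
        · exact hr _ h2
    · rw [List.getLast?_append_of_ne_nil _ (by simp)]
      cases r with
      | nil =>
        have : c = 2 := by
          by_contra hc1
          exact h ⟨by omega, rfl⟩
        subst this; simp
      | cons b y => simpa using hlast
    · have hz : NoAdj ((c-1) :: r) := by
        rw [noAdj_cons]
        exact ⟨by omega, hadj⟩
      exact noAdj_pat_append k hz (by simp; omega)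

lemma decomp : ∀ (l : List ℕ), l ≠ [] → l.getLast? ≠ some 0 →
    ∃ k c r, l = List.replicate k 0 ++ c :: r ∧ 1 ≤ c := by
  intro l
  induction l with
  | nil => intro h; tauto
  | cons b y ih =>
    intro _ hlast
    by_cases hb : b = 0
    · subst hb
      have hy : y ≠ [] := by
        rintro rfl
        simp at hlast
      obtain ⟨k, c, r, h1, h2⟩ := ih hy (by
        obtain ⟨u, v, huv⟩ := List.exists_cons_of_ne_nil hy
        subst huv
        simpa using hlast)
      exact ⟨k+1, c, r, by rw [List.replicate_succ, List.cons_append, h1], h2⟩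
    · exact ⟨0, b, y, by simp, by omega⟩

lemma good_tail {b : ℕ} {y : List ℕ} (a : ℕ) (h : GoodRep (a :: b :: y)) :
    GoodRep (b :: y) := by
  obtain ⟨h1, h2, h3⟩ := h
  refine ⟨fun d hd => h1 d (List.mem_cons_of_mem a hd), by simpa using h2, fun i => by simpa using h3 (i+1)⟩

lemma vK_pos : ∀ (l : List ℕ), ∀ i, l ≠ [] → l.getLast? ≠ some 0 → 1 ≤ vK i l := by
  intro l
  induction l with
  | nil => tauto
  | cons b y ih =>
    intro i _ hlast
    cases y with
    | nil =>
      simp at hlast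
      have := (Kcal_ge i).1
      show 1 ≤ b * Kcal i + vK (i+1) []
      have : 1 ≤ b * Kcal i := Nat.one_le_iff_ne_zero.mpr (by positivity)
      omega
    | cons u v =>
      have := ih (i+1) (by simp) (by simpa using hlast)
      show 1 ≤ b * Kcal (i) + vK (i+1) (u :: v)
      omega

lemma noAdj_replicate_elim : ∀ (k : ℕ) (z : List ℕ), NoAdj (List.replicate k 0 ++ z) → NoAdj z := by
  intro k
  induction k with
  | zero => intro z h; simpa using h
  | succ n ih =>
    intro z h
    rw [List.replicate_succ, List.cons_append, noAdj_cons] at h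
    exact ih z h.2

lemma vK_repl_append (k : ℕ) (z : List ℕ) :
    vK 0 (List.replicate k 0 ++ z) = vK k z := by
  rw [vK_append, vK_replicate0, List.length_replicate]; norm_num

lemma main_comb (g : ℕ → ℕ) (hg0 : g 0 = 0)
    (hg : ∀ n : ℕ, 1 ≤ n → g n = n - g (g (n - 1) / 2)) :
    ∀ n (a : ℕ) (x : List ℕ), GoodRep (a :: x) → vK 0 (a :: x) = n →
      g n = 2 * vK 0 x + a := by
  have hg_le : ∀ t, g t ≤ t := by
    intro t
    cases t with
    | zero => omega
    | succ u => rw [hg (u+1) (by omega)]; omega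
  intro n
  induction n using Nat.strong_induction_on with
  | _ n IH =>
  intro a x hgood hval
  -- n ≥ 1
  have hn1 : 1 ≤ n := hval ▸ vK_pos (a :: x) 0 (by simp) hgood.2.1
  -- decompose
  obtain ⟨k, c, r, hl, hc⟩ := decomp (a :: x) (by simp) hgood.2.1
  have hc2 : c ≤ 2 := hgood.1 c (by rw [hl]; exact List.mem_append_right _ (by simp))
  have hr : ∀ d ∈ r, d ≤ 2 := fun d hd =>
    hgood.1 d (by rw [hl]; exact List.mem_append_right _ (by simp [hd]))
  have hlast_cr : (c :: r).getLast? ≠ some 0 := by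
    have := hgood.2.1
    rw [hl, List.getLast?_append_of_ne_nil _ (by simp)] at this
    exact this
  have hadj_cr : NoAdj (c :: r) := by
    apply noAdj_replicate_elim k
    have := hgood.2.2
    rw [hl] at this
    exact this
  have hadj_r : NoAdj r := (noAdj_cons.mp hadj_cr).2
  have hn : n = c * Kcal k + vK (k+1) r := by
    rw [← hval, hl, vK_repl_append]; rfl
  have hK0 : Kcal 0 = 1 := rfl
  have hK1 : Kcal 1 = 3 := rfl
  by_cases hone : n = 1
  · -- base case n = 1
    have hk0 : k = 0 := by
      by_contra h
      obtain ⟨j, rfl⟩ : ∃ j, k = j + 1 := ⟨k-1, by omega⟩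
      have h3 := (Kcal_ge j).2
      have : 3 ≤ c * Kcal (j+1) := le_trans h3 (Nat.le_mul_of_pos_left _ (by omega))
      omega
    subst hk0
    rw [hK0] at hn
    norm_num at hn
    have hc1 : c = 1 := by omega
    have hrn : r = [] := by
      by_contra h
      have hlast_r : r.getLast? ≠ some 0 := by
        obtain ⟨u, v, huv⟩ := List.exists_cons_of_ne_nil h
        subst huv
        simpa using hlast_cr
      have := vK_pos r 1 h hlast_r
      omega
    subst hc1; subst hrn
    have hax : a = 1 ∧ x = [] := by simpa using hl
    obtain ⟨rfl, rfl⟩ := hax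
    have h1 := hg 1 (le_refl 1)
    norm_num [hg0] at h1
    rw [hone, h1]
    rfl
  · -- n ≥ 2
    have hn2 : 2 ≤ n := by omega
    have hne : ¬ (k = 0 ∧ c = 1 ∧ r = []) := by
      rintro ⟨rfl, rfl, rfl⟩
      rw [hK0] at hn
      simp [vK] at hn
      omega
    have hgood1 := good_decList k c r hc hc2 hr hlast_cr hadj_r hne
    have hval1 : vK 0 (decList k c r) + 1 = n := by rw [decList_val k c r hc]; omega
    cases k with
    | zero =>
      -- a = c, x = r
      have hax : a = c ∧ x = r := by simpa using hl
      obtain ⟨rfl, rfl⟩ := hax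
      rw [hK0] at hn; norm_num at hn
      -- hn : n = a + vK 1 x
      have hdl : decList 0 a x = (a-1) :: x := by
        rw [decList, if_neg (by tauto)]
        simp [pat]
      have hvdl : vK 0 ((a-1) :: x) = n - 1 := by rw [← hdl]; omega
      have hgn1 : g (n-1) = 2 * vK 0 x + (a-1) := by
        have hgd : GoodRep ((a-1) :: x) := hdl ▸ hgood1
        have hv1 : vK 0 ((a-1) :: x) = (a-1) + vK 1 x := by
          show (a-1) * Kcal 0 + vK 1 x = _
          rw [hK0]; ring
        have := IH (n-1) (by omega) (a-1) x hgd hvdl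
        -- need: 2 * vK 0 x + (a-1) but careful result mentions vK 0 x directly
        exact this
      have hm : g (n-1) / 2 = vK 0 x := by rw [hgn1]; omega
      have hgn : g n = n - g (vK 0 x) := by rw [hg n (by omega), hm]
      have hmlt : vK 0 x < n := by
        have h1 := hg_le (n-1)
        omega
      cases x with
      | nil =>
        have hv0 : vK 0 ([] : List ℕ) = 0 := rfl
        have hv1 : vK 1 ([] : List ℕ) = 0 := rfl
        rw [hgn, hv0, hg0]
        omega
      | cons b y =>
        have hgm : g (vK 0 (b :: y)) = 2 * vK 0 y + b :=
          IH _ hmlt b y (good_tail a hgood) rfl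
        have e1 : vK 1 (b :: y) = b * 3 + (2 * vK 1 y + 2 * vK 0 y) := by
          show b * Kcal 1 + vK 2 y = _
          rw [vK_two y 0, hK1]
        have e2 : vK 0 (b :: y) = b * 1 + vK 1 y := by
          show b * Kcal 0 + vK 1 y = _
          rw [hK0]
        omega
    | succ j =>
      -- a = 0, x = replicate j 0 ++ c :: r
      have hax : a = 0 ∧ x = List.replicate j 0 ++ c :: r := by
        rw [List.replicate_succ, List.cons_append] at hl
        exact ⟨by injection hl, by injection hl⟩
      obtain ⟨rfl, hx⟩ := hax
      have hS : vK 0 x = c * Kcal j + vK (j+1) r := by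
        rw [hx, vK_repl_append]; rfl
      have hvdlj : vK 0 (decList j c r) + 1 = c * Kcal j + vK (j+1) r :=
        decList_val j c r hc
      -- n = vK 1 x
      have hnx : n = vK 1 x := by
        rw [← hval]
        show (0 : ℕ) * Kcal 0 + vK 1 x = vK 1 x
        ring
      rcases Nat.even_or_odd j with hpar | hpar
      · -- j even : k odd, head 2, m = vK 0 x
        have hj0 : j % 2 = 0 := Nat.even_iff.mp hpar
        have hdl2 : decList (j+1) c r = 2 :: decList j c r := by
          rw [decList_succ]; simp [hj0]
        have hvdl : vK 0 (2 :: decList j c r) = n - 1 := by rw [← hdl2]; omega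
        have hgn1 : g (n-1) = 2 * vK 0 (decList j c r) + 2 :=
          IH (n-1) (by omega) 2 _ (hdl2 ▸ hgood1) hvdl
        have hv2c : vK 0 (2 :: decList j c r) = 2 + vK 1 (decList j c r) := by
          show 2 * Kcal 0 + vK 1 (decList j c r) = _
          rw [hK0]
        have hm : g (n-1) / 2 = vK 0 x := by rw [hgn1]; omega
        have hgn : g n = n - g (vK 0 x) := by rw [hg n (by omega), hm]
        have hmlt : vK 0 x < n := by
          have h1 := hg_le (n-1)
          omega
        have hxc : ∃ b y, x = b :: y := by
          cases j with
          | zero => exact ⟨c, r, by simpa using hx⟩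
          | succ i => exact ⟨0, List.replicate i 0 ++ c :: r, by
              rw [hx, List.replicate_succ, List.cons_append]⟩
        obtain ⟨b, y, hby⟩ := hxc
        have hgoodx : GoodRep (b :: y) := by
          rw [← hby]
          rw [hby] at hgood
          exact hby ▸ good_tail 0 hgood
        have hgm : g (vK 0 x) = 2 * vK 0 y + b := by
          rw [hby]
          exact IH _ (by rw [← hby]; exact hmlt) b y hgoodx rfl
        have e1 : vK 1 (b :: y) = b * 3 + (2 * vK 1 y + 2 * vK 0 y) := by
          show b * Kcal 1 + vK 2 y = _
          rw [vK_two y 0, hK1]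
        have e2 : vK 0 (b :: y) = b * 1 + vK 1 y := by
          show b * Kcal 0 + vK 1 y = _
          rw [hK0]
        rw [hby] at hnx hgn hgm ⊢
        omega
      · -- j odd : j = i+1, i even
        have hj1 : j % 2 = 1 := Nat.odd_iff.mp hpar
        obtain ⟨i, rfl⟩ : ∃ i, j = i + 1 := ⟨j-1, by omega⟩
        have hi0 : i % 2 = 0 := by omega
        have hdl1 : decList (i+1+1) c r = 1 :: decList (i+1) c r := by
          rw [decList_succ]; simp [hj1]
        have hvdl : vK 0 (1 :: decList (i+1) c r) = n - 1 := by rw [← hdl1]; omega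
        have hgn1 : g (n-1) = 2 * vK 0 (decList (i+1) c r) + 1 :=
          IH (n-1) (by omega) 1 _ (hdl1 ▸ hgood1) hvdl
        have hm : g (n-1) / 2 = vK 0 (decList (i+1) c r) := by rw [hgn1]; omega
        set m := vK 0 (decList (i+1) c r) with hmdef
        have hgn : g n = n - g m := by rw [hg n (by omega), hm]
        have hmlt : m < n := by
          have h1 := hg_le (n-1)
          omega
        -- rep of m : 2 :: decList i c r
        have hdl2 : decList (i+1) c r = 2 :: decList i c r := by
          rw [decList_succ]; simp [hi0]
        have hgood2 : GoodRep (decList (i+1) c r) :=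
          good_decList (i+1) c r hc hc2 hr hlast_cr hadj_r (by omega)
        have hvdli : vK 0 (decList i c r) + 1 = c * Kcal i + vK (i+1) r :=
          decList_val i c r hc
        have hgm : g m = 2 * vK 0 (decList i c r) + 2 :=
          IH m hmlt 2 _ (hdl2 ▸ hgood2) (by rw [← hdl2])
        -- final arithmetic
        have eK : c * Kcal (i+2) = 2 * (c * Kcal (i+1)) + 2 * (c * Kcal i) := by
          rw [Kcal_rec]; ring
        have eV : vK (i+3) r = 2 * vK (i+2) r + 2 * vK (i+1) r := vK_two r (i+1)
        -- hn : n = c * Kcal (i+2) + vK (i+3) r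
        have hn' : n = c * Kcal (i+2) + vK (i+3) r := hn
        have hS' : vK 0 x = c * Kcal (i+1) + vK (i+2) r := hS
        have hvdlj' : vK 0 (decList (i+1) c r) + 1 = c * Kcal (i+1) + vK (i+2) r := hvdlj
        clear hS hvdlj hn
        omega

noncomputable def sq3 : ℝ := Real.sqrt 3

lemma sq3_sq : sq3 ^ 2 = 3 := Real.sq_sqrt (by norm_num)
lemma sq3_gt : 1 < sq3 := by
  have : Real.sqrt 1 < Real.sqrt 3 := Real.sqrt_lt_sqrt (by norm_num) (by norm_num)
  simpa [sq3] using this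
lemma sq3_lt : sq3 < 2 := by
  have h4 : Real.sqrt 4 = 2 := by
    rw [show (4:ℝ) = 2^2 by norm_num, Real.sqrt_sq (by norm_num)]
  have : Real.sqrt 3 < Real.sqrt 4 := Real.sqrt_lt_sqrt (by norm_num) (by norm_num)
  rw [h4] at this
  exact this

lemma key_shift (y : List ℕ) : ∀ i,
    (sq3 - 1)/2 * (vK (i+2) y : ℝ) - (vK (i+1) y : ℝ) =
      (1 - sq3) * ((sq3 - 1)/2 * (vK (i+1) y : ℝ) - (vK i y : ℝ)) := by
  induction y with
  | nil => intro i; simp [vK]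
  | cons d z ih =>
    intro i
    have e0 : ∀ j, (vK j (d :: z) : ℝ) = d * Kcal j + vK (j+1) z := by
      intro j; push_cast [vK]; ring
    have hK : (Kcal (i+2) : ℝ) = 2*Kcal (i+1) + 2*Kcal i := by
      rw [Kcal_rec]; push_cast; ring
    have hs := sq3_sq
    have hi2 : (sq3 - 1)/2 * (vK (i+3) z : ℝ) - (vK (i+2) z : ℝ) =
      (1 - sq3) * ((sq3 - 1)/2 * (vK (i+2) z : ℝ) - (vK (i+1) z : ℝ)) := ih (i+1)
    rw [e0 (i+2), e0 (i+1), e0 i, hK]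
    have h3 : (vK (i+2+1) z : ℝ) = (vK (i+3) z : ℝ) := rfl
    rw [h3]
    linear_combination hi2 + ((d : ℝ) * (Kcal (i+1) : ℝ)/2) * hs

lemma Dbound : ∀ (x : List ℕ), (∀ d ∈ x, d ≤ 2) →
    2 - 4*sq3/3 < (sq3 - 1)/2 * (vK 1 x : ℝ) - (vK 0 x : ℝ) ∧
    (sq3 - 1)/2 * (vK 1 x : ℝ) - (vK 0 x : ℝ) < 1 - sq3/3 := by
  have hs := sq3_sq
  have h1 := sq3_gt
  have h2 := sq3_lt
  intro x
  induction x with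
  | nil =>
    intro _
    have hz : ∀ j, (vK j ([] : List ℕ) : ℝ) = 0 := by intro j; simp [vK]
    rw [hz 1, hz 0]
    constructor
    · nlinarith
    · nlinarith
  | cons b y ih =>
    intro hd
    obtain ⟨hyl, hyu⟩ := ih (fun d hdy => hd d (List.mem_cons_of_mem b hdy))
    have hb2 : (b : ℝ) ≤ 2 := by exact_mod_cast hd b (by simp)
    have hb0 : (0:ℝ) ≤ (b:ℝ) := by positivity
    have hψ : (1 - sq3) < 0 := by linarith
    have hα : (0:ℝ) ≤ (3*sq3 - 5)/2 := by nlinarith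
    have hks2 : (sq3 - 1)/2 * (vK 2 y : ℝ) - (vK 1 y : ℝ)
        = (1 - sq3) * ((sq3 - 1)/2 * (vK 1 y : ℝ) - (vK 0 y : ℝ)) := key_shift y 0
    have hv1 : (vK 1 (b :: y) : ℝ) = 3*(b:ℝ) + (vK 2 y : ℝ) := by
      push_cast [vK, show Kcal 1 = 3 from rfl]; ring
    have hv0 : (vK 0 (b :: y) : ℝ) = (b:ℝ) + (vK 1 y : ℝ) := by
      push_cast [vK, show Kcal 0 = 1 from rfl]; ring
    have key : (sq3 - 1)/2 * (vK 1 (b :: y) : ℝ) - (vK 0 (b :: y) : ℝ)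
        = (b:ℝ) * ((3*sq3 - 5)/2)
          + (1 - sq3) * ((sq3 - 1)/2 * (vK 1 y : ℝ) - (vK 0 y : ℝ)) := by
      rw [hv1, hv0]
      linear_combination hks2
    rw [key]
    have hup : (1 - sq3) * ((sq3-1)/2 * (vK 1 y:ℝ) - (vK 0 y:ℝ)) < (1 - sq3) * (2 - 4*sq3/3) :=
      mul_lt_mul_of_neg_left hyl hψ
    have hlo : (1 - sq3) * (1 - sq3/3) < (1 - sq3) * ((sq3-1)/2 * (vK 1 y:ℝ) - (vK 0 y:ℝ)) :=
      mul_lt_mul_of_neg_left hyu hψ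
    have elo : (1 - sq3) * (1 - sq3/3) = 2 - 4*sq3/3 := by
      linear_combination (1/3) * hs
    have eup : (1 - sq3) * (2 - 4*sq3/3) = 6 - 10*sq3/3 := by
      linear_combination (4/3) * hs
    have hba := mul_nonneg hb0 hα
    have hba2 := mul_le_mul_of_nonneg_right hb2 hα
    constructor
    · linarith
    · linarith

theorem gut_closed_form (g : ℕ → ℕ)
    (hg0 : g 0 = 0) (hg : ∀ n : ℕ, 1 ≤ n → g n = n - g (g (n - 1) / 2)) :
    ∀ (n a : ℕ) (x : List ℕ), 1 ≤ n → GoodRep (a :: x) → valK (a :: x) = n →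
      (a = 1 → (g n : ℤ) = 2 * ⌊((Real.sqrt 3 - 1) / 2) * (n : ℝ)⌋ + 1) ∧
      ((a = 0 ∨ a = 2) →
        (g n : ℤ) = 2 * ⌊((Real.sqrt 3 - 1) / 2) * (n : ℝ) + Real.sqrt 3 / 3⌋) := by
  intro n a x hn hgood hval
  rw [valK_eq_vK] at hval
  have hcomb : g n = 2 * vK 0 x + a := main_comb g hg0 hg n a x hgood hval
  have hdig : ∀ d ∈ x, d ≤ 2 := fun d hd => hgood.1 d (List.mem_cons_of_mem a hd)
  obtain ⟨hDl, hDu⟩ := Dbound x hdig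
  have hs := sq3_sq
  have h1 := sq3_gt
  have h2 := sq3_lt
  have hnr : (n : ℝ) = (a : ℝ) + (vK 1 x : ℝ) := by
    rw [← hval]
    push_cast [vK, show Kcal 0 = 1 from rfl]
    ring
  have hsq : Real.sqrt 3 = sq3 := rfl
  constructor
  · rintro rfl
    have hfl : ⌊((sq3 - 1) / 2) * (n : ℝ)⌋ = (vK 0 x : ℤ) := by
      rw [Int.floor_eq_iff]
      constructor
      · rw [hnr]; push_cast; nlinarith
      · rw [hnr]; push_cast; nlinarith
    rw [hsq, hfl, hcomb]
    push_cast
    ring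
  · rintro (rfl | rfl)
    · have hfl : ⌊((sq3 - 1) / 2) * (n : ℝ) + sq3 / 3⌋ = (vK 0 x : ℤ) := by
        rw [Int.floor_eq_iff]
        constructor
        · rw [hnr]; push_cast; nlinarith
        · rw [hnr]; push_cast; nlinarith
      rw [hsq, hfl, hcomb]
      push_cast
      ring
    · have hfl : ⌊((sq3 - 1) / 2) * (n : ℝ) + sq3 / 3⌋ = (vK 0 x : ℤ) + 1 := by
        rw [Int.floor_eq_iff]
        constructor
        · rw [hnr]; push_cast; nlinarith
        · rw [hnr]; push_cast; nlinarith
      rw [hsq, hfl, hcomb]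
      push_cast
      ring
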